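/- Let eta > 1 and let x_th in (0, 1/2) satisfy x_th^{-eta} = 1 + (1 - x_th)^{-eta} (normalized by L = 1). Then f1(x_th) = (x_th^{1-eta} - 1)^2 / x_th^{-eta} < (x_th^{-eta} - 1)^2 / x_th^{-eta} = f2(x_th), where f1, f2 are as in the power-law placement problem. Consequently the unique root p of f1 = f2 in (0,1/2) satisfies p < x_th. -/

import Mathlib

open Real

/-- `f1(x) = (x^{1-η} - 1)² (1 - (1/x - 1)^{-η})`. -/
noncomputable def f1 (η x : ℝ) : ℝ :=
  (x ^ (1 - η) - 1) ^ 2 * (1 - (1 / x - 1) ^ (-η))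

/-- `f2(x) = (1-x)^{-η} - (1/x - 1)^{-η}`. -/
noncomputable def f2 (η x : ℝ) : ℝ :=
  (1 - x) ^ (-η) - (1 / x - 1) ^ (-η)

lemma aux_rw (η x : ℝ) (hx0 : 0 < x) (hx1 : x < 1) :
    (1 / x - 1) ^ (-η) = (1 - x) ^ (-η) / x ^ (-η) := by
  have h : 1 / x - 1 = (1 - x) / x := by field_simp
  rw [h, Real.div_rpow (by linarith) hx0.le]

/-- Key: if `x^{-η} - (1-x)^{-η} ≤ 1` then `f1 < f2`. -/
lemma key_lt (η x : ℝ) (hη : 1 < η) (hx0 : 0 < x) (hx2 : x < 1 / 2)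
    (hab : x ^ (-η) - (1 - x) ^ (-η) ≤ 1) : f1 η x < f2 η x := by
  have hx1 : x < 1 := by linarith
  set A := x ^ (-η) with hA
  set B := (1 - x) ^ (-η) with hB
  set C := x ^ (1 - η) with hC
  have hA0 : 0 < A := Real.rpow_pos_of_pos hx0 _
  have hB0 : 0 < B := Real.rpow_pos_of_pos (by linarith) _
  have hA1 : 1 < A := Real.one_lt_rpow_of_pos_of_lt_one_of_neg hx0 hx1 (by linarith)
  have hC1 : 1 < C := Real.one_lt_rpow_of_pos_of_lt_one_of_neg hx0 hx1 (by linarith)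
  have hBA : B < A := Real.rpow_lt_rpow_of_neg hx0 (by linarith) (by linarith)
  have hCA : C < A := by
    have : C = x * A := by
      rw [hC, hA, show (1 : ℝ) - η = 1 + -η by ring, Real.rpow_add hx0, Real.rpow_one]
    rw [this]
    nlinarith
  have hnum : (C - 1) ^ 2 * (A - B) < B * (A - 1) := by
    nlinarith [mul_pos (sub_pos.2 hBA) (sub_pos.2 hCA), sq_nonneg (A - C),
      mul_pos (sub_pos.2 hC1) (sub_pos.2 hCA)]
  rw [f1, f2, aux_rw η x hx0 hx1, ← hA, ← hB, ← hC]
  rw [show (1 : ℝ) - B / A = (A - B) / A by field_simp,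
    show B - B / A = B * (A - 1) / A by field_simp, ← mul_div_assoc,
    div_lt_div_iff₀ hA0 hA0]
  nlinarith [mul_lt_mul_of_pos_right hnum hA0]

theorem stmt_5 (η x_th : ℝ) (hη : 1 < η) (hx : x_th ∈ Set.Ioo (0 : ℝ) (1 / 2))
    (hth : x_th ^ (-η) = 1 + (1 - x_th) ^ (-η)) :
    f1 η x_th = (x_th ^ (1 - η) - 1) ^ 2 / x_th ^ (-η) ∧
    f2 η x_th = (x_th ^ (-η) - 1) ^ 2 / x_th ^ (-η) ∧
    f1 η x_th < f2 η x_th ∧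
    ∀ p ∈ Set.Ioo (0 : ℝ) (1 / 2), f1 η p = f2 η p → p < x_th := by
  obtain ⟨hx0, hx2⟩ := hx
  have hx1 : x_th < 1 := by linarith
  have hA0 : (0 : ℝ) < x_th ^ (-η) := Real.rpow_pos_of_pos hx0 _
  have hB0 : (0 : ℝ) < (1 - x_th) ^ (-η) := Real.rpow_pos_of_pos (by linarith) _
  refine ⟨?_, ?_, key_lt η x_th hη hx0 hx2 (by linarith), ?_⟩
  · rw [f1, aux_rw η x_th hx0 hx1, hth]
    field_simp
    ring
  · rw [f2, aux_rw η x_th hx0 hx1, hth]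
    field_simp
    ring
  · intro p hp hfp
    by_contra h
    push_neg at h
    have hp0 : 0 < p := hp.1
    have hab : p ^ (-η) - (1 - p) ^ (-η) ≤ 1 := by
      have h1 : p ^ (-η) ≤ x_th ^ (-η) :=
        Real.rpow_le_rpow_of_nonpos hx0 h (by linarith)
      have h2 : (1 - x_th) ^ (-η) ≤ (1 - p) ^ (-η) :=
        Real.rpow_le_rpow_of_nonpos (by linarith [hp.2]) (by linarith) (by linarith)
      linarith [hth]
    exact absurd hfp (ne_of_lt (key_lt η p hη hp0 hp.2 hab))
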